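/- Let I : (0,∞) → ℝ be differentiable, nonnegative, and satisfy I'(t) + (2/N) I(t)² ≤ 0 for all t > 0, where N > 0. If lim sup_{t→0+} t·I(t) ≤ N/2, then I(t) ≤ N/(2t) for all t > 0. -/

import Mathlib

open Real Set Filter

/-- If `I ≥ 0` is differentiable on `(0,∞)` and satisfies
`I' + (2/N) I² ≤ 0` (with `N > 0`) and `limsup_{t→0+} t I(t) ≤ N/2`, then
`I(t) ≤ N/(2t)` for all `t > 0`. -/
theorem fisher_info_bound (I : ℝ → ℝ) (N : ℝ) (hN : 0 < N)
    (hd : ∀ t ∈ Ioi (0:ℝ), DifferentiableAt ℝ I t)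
    (hnn : ∀ t ∈ Ioi (0:ℝ), 0 ≤ I t)
    (hRic : ∀ t ∈ Ioi (0:ℝ), deriv I t + (2 / N) * (I t) ^ 2 ≤ 0)
    (hlim : Filter.limsup (fun t => t * I t) (nhdsWithin 0 (Ioi 0)) ≤ N / 2) :
    ∀ t ∈ Ioi (0:ℝ), I t ≤ N / (2 * t) := by
  -- I is antitone on (0,∞)
  have hanti : AntitoneOn I (Ioi 0) := by
    apply antitoneOn_of_deriv_nonpos (convex_Ioi 0)
    · exact fun x hx => (hd x hx).continuousAt.continuousWithinAt
    · intro x hx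
      rw [interior_Ioi] at hx
      exact (hd x hx).differentiableWithinAt
    · intro x hx
      rw [interior_Ioi] at hx
      have h1 := hRic x hx
      have h2 := hnn x hx
      nlinarith [sq_nonneg (I x), div_pos (by norm_num : (0:ℝ) < 2) hN]
  intro t ht
  by_contra hcon
  push_neg at hcon
  have ht0 : (0:ℝ) < t := ht
  have hIt : 0 < I t := lt_trans (by positivity) hcon
  set c := N / 2 * (I t)⁻¹ with hc
  have hc0 : 0 < c := by positivity
  have hct : c < t := by
    have key : 0 < (t - c) * I t := by
      have h1 : c * I t = N / 2 := by
        rw [hc, mul_assoc, inv_mul_cancel₀ hIt.ne', mul_one]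
      have h2 : N / (2 * t) * t = N / 2 := by
        field_simp
      nlinarith [mul_lt_mul_of_pos_right hcon ht0]
    nlinarith [key, hIt]
  set s₀ := (t - c) / 2 with hs₀def
  have hs0 : 0 < s₀ := by simp only [hs₀def]; linarith
  have hst : s₀ < t := by
    simp only [hs₀def]; linarith
  have hpos : ∀ x ∈ Icc s₀ t, 0 < I x := by
    intro x hx
    exact lt_of_lt_of_le hIt (hanti (hs0.trans_le hx.1) ht hx.2)
  set f : ℝ → ℝ := fun x => N / 2 * (I x)⁻¹ - x with hf
  have hderiv : ∀ x ∈ Icc s₀ t,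
      HasDerivAt f (N / 2 * (-(deriv I x) / (I x) ^ 2) - 1) x := by
    intro x hx
    have hx0 : 0 < x := hs0.trans_le hx.1
    have hIx : I x ≠ 0 := (hpos x hx).ne'
    have h1 : HasDerivAt I (deriv I x) x := (hd x hx0).hasDerivAt
    have h2 := (h1.inv hIx).const_mul (N / 2)
    exact h2.sub (hasDerivAt_id x)
  have hmono : MonotoneOn f (Icc s₀ t) := by
    apply monotoneOn_of_deriv_nonneg (convex_Icc s₀ t)
    · exact fun x hx =>
        (hderiv x hx).differentiableAt.continuousAt.continuousWithinAt
    · intro x hx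
      rw [interior_Icc] at hx
      exact (hderiv x (Ioo_subset_Icc_self hx)).differentiableAt.differentiableWithinAt
    · intro x hx
      rw [interior_Icc] at hx
      have hx' : x ∈ Icc s₀ t := Ioo_subset_Icc_self hx
      rw [(hderiv x hx').deriv]
      have hx0 : 0 < x := hs0.trans_le hx'.1
      have hr := hRic x hx0
      have hp := hpos x hx'
      have hp2 : (0:ℝ) < (I x) ^ 2 := by positivity
      rw [sub_nonneg, mul_div_assoc', le_div_iff₀ hp2]
      have h3 : N / 2 * (2 / N * (I x) ^ 2) = (I x) ^ 2 := by
        field_simp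
      nlinarith [mul_le_mul_of_nonneg_left hr (by positivity : (0:ℝ) ≤ N / 2)]
  have hfin := hmono ⟨le_refl s₀, hst.le⟩ ⟨hst.le, le_refl t⟩ hst.le
  have h4 : f t = c - t := by simp [hf, hc]
  have h5 : 0 < N / 2 * (I s₀)⁻¹ := by
    have := hpos s₀ ⟨le_refl s₀, hst.le⟩
    positivity
  have h6 : f s₀ = N / 2 * (I s₀)⁻¹ - s₀ := rfl
  rw [h4, h6] at hfin
  simp only [hs₀def] at hfin h5
  linarith
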